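/- Let X be a real Banach space, Φ : X → ℝ ∪ {+∞} proper, lsc, convex, and let x̄ ∈ dom Φ, δ ≥ 0, λ ∈ ℝ with Φ(x̄) ≤ λ < ∞. Suppose Slater's condition holds at λ: there exists x₀ with Φ(x₀) < λ. If ξ belongs to the δ-normal set N^δ_{[Φ≤λ]}(x̄) := {x* : ⟨x*, x − x̄⟩ ≤ δ for all x with Φ(x) ≤ λ}, then there exists μ ≥ 0 such that ξ ∈ ∂_{δ + μ(Φ(x̄) − λ)}(μΦ)(x̄). -/

import Mathlib

open Set Topology Filter

/-- `μΦ` with the convention `(0·Φ)(x) = 0` on `dom Φ` and `+∞` outside. -/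
noncomputable def smulPhi {X : Type*} (μ : ℝ) (Φ : X → EReal) : X → EReal :=
  fun x => if Φ x = ⊤ then ⊤ else ((μ : ℝ) : EReal) * Φ x

theorem stmt2 {X : Type*} [NormedAddCommGroup X] [NormedSpace ℝ X] [CompleteSpace X]
    (Φ : X → EReal)
    (hproper : ∃ z, Φ z ≠ ⊤) (hbot : ∀ z, Φ z ≠ ⊥)
    (hconv : ∀ x y : X, ∀ t : ℝ, 0 ≤ t → t ≤ 1 →
      Φ (t • x + (1 - t) • y) ≤ ((t : ℝ) : EReal) * Φ x + (((1 - t : ℝ)) : EReal) * Φ y)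
    (hlsc : LowerSemicontinuous Φ)
    (xb : X) (c : ℝ) (hc : Φ xb = (c : EReal))
    (lam δ : ℝ) (hδ : 0 ≤ δ) (hclam : c ≤ lam)
    (slater : ∃ x₀ : X, Φ x₀ < ((lam : ℝ) : EReal))
    (ξ : X →L[ℝ] ℝ)
    (hξ : ∀ u : X, Φ u ≤ ((lam : ℝ) : EReal) → ξ (u - xb) ≤ δ) :
    ∃ μ : ℝ, 0 ≤ μ ∧ ∀ u : X,
      smulPhi μ Φ xb + ((ξ (u - xb) : ℝ) : EReal) ≤
        smulPhi μ Φ u + (((δ + μ * (c - lam) : ℝ)) : EReal) := by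
  classical
  -- the set of candidate multipliers coming from strictly feasible points
  set S : Set ℝ := { m | ∃ (u : X) (a : ℝ), Φ u = (a : EReal) ∧ a < lam ∧
      m = (δ - ξ (u - xb)) / (lam - a) } with hS
  -- S is nonempty (Slater)
  obtain ⟨x₀, hx₀⟩ := slater
  obtain ⟨a₀, ha₀⟩ : ∃ a : ℝ, Φ x₀ = (a : EReal) := by
    have h1 : Φ x₀ ≠ ⊤ := fun h => by simp [h] at hx₀
    lift Φ x₀ to ℝ using ⟨h1, hbot x₀⟩ with a
    exact ⟨a, rfl⟩
  have ha₀lam : a₀ < lam := by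
    rw [ha₀] at hx₀; exact_mod_cast hx₀
  have hSne : S.Nonempty := ⟨_, x₀, a₀, ha₀, ha₀lam, rfl⟩
  -- every element of S is nonnegative
  have hS0 : ∀ m ∈ S, 0 ≤ m := by
    rintro m ⟨u, a, hu, halam, rfl⟩
    have hξu : ξ (u - xb) ≤ δ := hξ u (by rw [hu]; exact_mod_cast halam.le)
    exact div_nonneg (by linarith) (by linarith)
  have hSbdd : BddBelow S := ⟨0, hS0⟩
  set μ : ℝ := sInf S with hμ
  have hμ0 : 0 ≤ μ := le_csInf hSne hS0
  refine ⟨μ, hμ0, fun u => ?_⟩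
  -- rewrite LHS using Φ xb = c
  have hxbT : Φ xb ≠ ⊤ := by rw [hc]; exact EReal.coe_ne_top c
  rw [smulPhi, smulPhi, hc, if_neg (EReal.coe_ne_top c), ← EReal.coe_mul]
  by_cases huT : Φ u = ⊤
  · rw [if_pos huT]
    rw [← EReal.coe_add, EReal.top_add_of_ne_bot (EReal.coe_ne_bot _)]
    exact le_top
  · rw [if_neg huT]
    obtain ⟨b, hb⟩ : ∃ b : ℝ, Φ u = (b : EReal) := by
      lift Φ u to ℝ using ⟨huT, hbot u⟩ with b
      exact ⟨b, rfl⟩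
    rw [hb, ← EReal.coe_mul, ← EReal.coe_add, ← EReal.coe_add,
      EReal.coe_le_coe_iff]
    -- reduce to : ξ (u - xb) ≤ μ * (b - lam) + δ
    have key : ξ (u - xb) ≤ μ * (b - lam) + δ := by
      rcases lt_trichotomy b lam with hblt | hbeq | hbgt
      · -- b < lam : μ ≤ (δ - ξ(u-xb))/(lam - b)
        have hmem : (δ - ξ (u - xb)) / (lam - b) ∈ S := ⟨u, b, hb, hblt, rfl⟩
        have hle : μ ≤ (δ - ξ (u - xb)) / (lam - b) := csInf_le hSbdd hmem
        have hpos : 0 < lam - b := by linarith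
        rw [le_div_iff₀ hpos] at hle
        nlinarith
      · have hξu : ξ (u - xb) ≤ δ := hξ u (by rw [hb, hbeq])
        rw [hbeq]; simpa using hξu
      · -- b > lam : (ξ(u-xb) - δ)/(b - lam) is a lower bound of S
        have hlb : ∀ m ∈ S, (ξ (u - xb) - δ) / (b - lam) ≤ m := by
          rintro m ⟨w, a, hw, halam, rfl⟩
          -- three-point convexity argument with w (Φ w = a < lam) and u (Φ u = b > lam)
          have hba : a < b := lt_trans halam hbgt
          have hbapos : (0:ℝ) < b - a := by linarith
          set t : ℝ := (lam - a) / (b - a) with ht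
          have ht0 : 0 ≤ t := div_nonneg (by linarith) hbapos.le
          have ht1 : t ≤ 1 := by
            rw [div_le_one hbapos]; linarith
          have hcomb := hconv u w t ht0 ht1
          rw [hb, hw, ← EReal.coe_mul, ← EReal.coe_mul, ← EReal.coe_add] at hcomb
          have hval : t * b + (1 - t) * a = lam := by
            field_simp [ht]
            have h' : t * (b - a) = lam - a := by rw [ht]; exact div_mul_cancel₀ _ hbapos.ne'
            linarith
          rw [hval] at hcomb
          have hξw := hξ _ hcomb
          have hξlin : ξ (t • u + (1 - t) • w - xb)
              = t * ξ (u - xb) + (1 - t) * ξ (w - xb) := by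
            have : t • u + (1 - t) • w - xb = t • (u - xb) + (1 - t) • (w - xb) := by
              module
            rw [this]
            simp [map_add, map_smul, smul_eq_mul]
          rw [hξlin] at hξw
          -- now : t * ξ(u-xb) + (1-t) * ξ(w-xb) ≤ δ
          have hpos1 : (0:ℝ) < b - lam := by linarith
          have hpos2 : (0:ℝ) < lam - a := by linarith
          rw [div_le_div_iff₀ hpos1 hpos2]
          have htval : t * (b - a) = lam - a := by
            rw [ht]; field_simp
          have h1mtval : (1 - t) * (b - a) = b - lam := by nlinarith [htval]
          have hmain : (lam - a) * ξ (u - xb) + (b - lam) * ξ (w - xb) ≤ δ * (b - a) := by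
            calc (lam - a) * ξ (u - xb) + (b - lam) * ξ (w - xb)
                = (t * (b - a)) * ξ (u - xb) + ((1 - t) * (b - a)) * ξ (w - xb) := by
                  rw [htval, h1mtval]
              _ = (t * ξ (u - xb) + (1 - t) * ξ (w - xb)) * (b - a) := by ring
              _ ≤ δ * (b - a) := mul_le_mul_of_nonneg_right hξw hbapos.le
          nlinarith [hmain]
        have hle : (ξ (u - xb) - δ) / (b - lam) ≤ μ := le_csInf hSne hlb
        have hpos : (0:ℝ) < b - lam := by linarith
        rw [div_le_iff₀ hpos] at hle
        nlinarith
    linarith
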